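/- arXiv:2006.16513 — 4 statements merged into one kernel-verified Lean document; each statement's English description precedes it below -/
import Mathlib

section
/- Let m be a positive even integer and let A, B ⊆ Z_m with A ∪ B = Z_m and |A ∩ B| = m - 2. Then R_A(n) = R_B(n) for all n ∈ Z_m if and only if B = A + m/2. -/
open Finset

/-- Representation function: number of ordered pairs (a, a') in A × A with a + a' = n. -/
def repFn {m : ℕ} (A : Finset (ZMod m)) (n : ZMod m) : ℕ :=
  ((A ×ˢ A).filter (fun p => p.1 + p.2 = n)).card

lemma repFn_eq {m : ℕ} (A : Finset (ZMod m)) (n : ZMod m) :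
    repFn A n = (A.filter (fun x => n - x ∈ A)).card := by
  unfold repFn
  apply Finset.card_bij' (fun p _ => p.1) (fun x _ => (x, n - x))
  · intro p hp
    simp only [mem_filter, mem_product] at hp ⊢
    refine ⟨hp.1.1, ?_⟩
    have : p.2 = n - p.1 := by rw [← hp.2]; ring
    rw [← this]; exact hp.1.2
  · intro x hx
    simp only [mem_filter, mem_product] at hx ⊢
    exact ⟨⟨hx.1, hx.2⟩, by ring⟩
  · intro p hp
    simp only [mem_filter, mem_product] at hp
    have : p.2 = n - p.1 := by rw [← hp.2]; ring
    exact Prod.ext rfl this.symm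
  · intro x hx; rfl

lemma sum_repFn {m : ℕ} [NeZero m] (A : Finset (ZMod m)) :
    ∑ n : ZMod m, repFn A n = A.card * A.card := by
  unfold repFn
  rw [← Finset.card_product]
  exact (Finset.card_eq_sum_card_fiberwise (s := A ×ˢ A) (t := univ)
    (f := fun p : ZMod m × ZMod m => p.1 + p.2) (fun p _ => mem_univ _)).symm

lemma repFn_compl {m : ℕ} [NeZero m] (b n : ZMod m) :
    repFn ({b}ᶜ : Finset (ZMod m)) n = m - ({b, n - b} : Finset (ZMod m)).card := by
  rw [repFn_eq]
  have h : ({b}ᶜ : Finset (ZMod m)).filter (fun x => n - x ∈ ({b}ᶜ : Finset (ZMod m)))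
      = univ \ {b, n - b} := by
    ext x
    simp only [mem_filter, mem_compl, mem_singleton, mem_sdiff, mem_univ, mem_insert,
      true_and, not_or]
    constructor
    · rintro ⟨h1, h2⟩
      refine ⟨h1, fun hx => h2 ?_⟩
      rw [hx]; ring
    · rintro ⟨h1, h2⟩
      refine ⟨h1, fun hx => h2 ?_⟩
      rw [← hx]; ring
  rw [h, card_sdiff_of_subset (subset_univ _), card_univ, ZMod.card]

lemma half_of_two_mul_eq_zero {m : ℕ} [NeZero m] (hm : Even m) {x : ZMod m}
    (hx : x + x = 0) (hx0 : x ≠ 0) : x = ((m / 2 : ℕ) : ZMod m) := by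
  have hv : ((2 * x.val : ℕ) : ZMod m) = 0 := by
    push_cast
    rw [ZMod.natCast_val, ZMod.cast_id]
    rw [two_mul]; exact hx
  have hdvd : m ∣ 2 * x.val := (ZMod.natCast_eq_zero_iff _ _).mp hv
  have hlt : x.val < m := ZMod.val_lt x
  have hne : x.val ≠ 0 := by
    intro h
    exact hx0 (by rwa [ZMod.val_eq_zero] at h)
  obtain ⟨k, hk⟩ := hdvd
  have hkpos : 0 < k := by
    rcases Nat.eq_zero_or_pos k with h0 | h0
    · subst h0; omega
    · exact h0
  have hklt : k < 2 := by
    by_contra hk2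
    push_neg at hk2
    have := Nat.mul_le_mul_left m hk2
    omega
  have hk1 : k = 1 := by omega
  subst hk1
  have : 2 * x.val = m := by omega
  have hval : m / 2 = x.val := by omega
  rw [hval, ZMod.natCast_val, ZMod.cast_id]

theorem stmt3 (m : ℕ) [NeZero m] (hm : Even m)
    (A B : Finset (ZMod m)) (hU : A ∪ B = Finset.univ) (hI : (A ∩ B).card = m - 2) :
    (∀ n : ZMod m, repFn A n = repFn B n) ↔
      B = A.image (fun x => x + ((m / 2 : ℕ) : ZMod m)) := by
  have hmod : m % 2 = 0 := Nat.even_iff.mp hm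
  have hm2 : 2 ≤ m := by
    have := NeZero.ne m
    omega
  set c : ZMod m := ((m / 2 : ℕ) : ZMod m) with hc
  have hcc : c + c = 0 := by
    rw [hc, ← Nat.cast_add]
    have : m / 2 + m / 2 = m := by omega
    rw [this, ZMod.natCast_self]
  constructor
  · intro h
    -- cardinalities are equal
    have hcard : A.card = B.card := by
      have := sum_repFn A
      rw [Finset.sum_congr rfl (fun n _ => h n), sum_repFn B] at this
      exact Nat.mul_self_inj.mp this.symm
    have hsum : A.card + B.card = m + (m - 2) := by
      have := Finset.card_union_add_card_inter A B
      rw [hU, hI, card_univ, ZMod.card] at this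
      omega
    have hA : A.card = m - 1 := by omega
    have hB : B.card = m - 1 := by omega
    -- A = {b0}ᶜ, B = {a0}ᶜ
    have hAc : (Aᶜ).card = 1 := by
      rw [Finset.card_compl, ZMod.card, hA]; omega
    have hBc : (Bᶜ).card = 1 := by
      rw [Finset.card_compl, ZMod.card, hB]; omega
    obtain ⟨b0, hb0⟩ := Finset.card_eq_one.mp hAc
    obtain ⟨a0, ha0⟩ := Finset.card_eq_one.mp hBc
    have hAeq : A = ({b0}ᶜ : Finset (ZMod m)) := by rw [← hb0, compl_compl]
    have hBeq : B = ({a0}ᶜ : Finset (ZMod m)) := by rw [← ha0, compl_compl]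
    have hb0A : b0 ∉ A := by rw [hAeq]; simp
    have ha0B : a0 ∉ B := by rw [hBeq]; simp
    have hb0B : b0 ∈ B := by
      have : b0 ∈ A ∪ B := by rw [hU]; exact mem_univ _
      rcases mem_union.mp this with h' | h'
      · exact absurd h' hb0A
      · exact h'
    have hne : a0 ≠ b0 := fun h' => ha0B (h' ▸ hb0B)
    -- evaluate at n = a0 + a0
    have key := h (a0 + a0)
    rw [hAeq, hBeq, repFn_compl, repFn_compl] at key
    have hrhs : ({a0, a0 + a0 - a0} : Finset (ZMod m)).card = 1 := by
      have : a0 + a0 - a0 = a0 := by ring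
      rw [this]; simp
    rw [hrhs] at key
    have hSle : ({b0, a0 + a0 - b0} : Finset (ZMod m)).card ≤ 2 :=
      (Finset.card_insert_le _ _).trans (by simp)
    have hSpos : 1 ≤ ({b0, a0 + a0 - b0} : Finset (ZMod m)).card := by
      rw [Nat.one_le_iff_ne_zero, ← Nat.pos_iff_ne_zero]
      exact Finset.card_pos.mpr ⟨b0, by simp⟩
    have hS1 : ({b0, a0 + a0 - b0} : Finset (ZMod m)).card = 1 := by omega
    have heq2 : a0 + a0 - b0 = b0 := by
      obtain ⟨z, hz⟩ := Finset.card_eq_one.mp hS1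
      have h1 : b0 ∈ ({z} : Finset (ZMod m)) := by rw [← hz]; simp
      have h2 : a0 + a0 - b0 ∈ ({z} : Finset (ZMod m)) := by rw [← hz]; simp
      simp only [mem_singleton] at h1 h2
      rw [h2, h1]
    -- derive b0 = a0 + c
    have hxx : (a0 - b0) + (a0 - b0) = 0 := by
      have h2 : a0 + a0 = b0 + b0 := eq_add_of_sub_eq heq2
      linear_combination h2
    have hx0 : a0 - b0 ≠ 0 := sub_ne_zero.mpr hne
    have hhalf : a0 - b0 = c := half_of_two_mul_eq_zero hm hxx hx0
    have ha0c : a0 = b0 + c := by rw [← hhalf]; ring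
    -- conclude
    rw [hBeq, hAeq]
    ext y
    simp only [mem_image, mem_compl, mem_singleton]
    constructor
    · intro hy
      refine ⟨y - c, fun h' => hy ?_, by ring⟩
      rw [ha0c, ← h']; ring
    · rintro ⟨x, hx, rfl⟩ h'
      apply hx
      rw [ha0c] at h'
      exact add_right_cancel h'
  · intro h n
    rw [h]
    unfold repFn
    apply Finset.card_bij' (fun p _ => (p.1 + c, p.2 + c)) (fun p _ => (p.1 - c, p.2 - c))
    · intro p hp
      simp only [mem_filter, mem_product, mem_image] at hp ⊢
      refine ⟨⟨⟨p.1, hp.1.1, rfl⟩, ⟨p.2, hp.1.2, rfl⟩⟩, ?_⟩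
      have : p.1 + c + (p.2 + c) = p.1 + p.2 + (c + c) := by ring
      rw [this, hcc, add_zero, hp.2]
    · intro p hp
      simp only [mem_filter, mem_product, mem_image] at hp ⊢
      obtain ⟨⟨⟨x1, hx1, he1⟩, ⟨x2, hx2, he2⟩⟩, hs⟩ := hp
      refine ⟨⟨?_, ?_⟩, ?_⟩
      · rw [← he1]; simpa using hx1
      · rw [← he2]; simpa using hx2
      · have : p.1 - c + (p.2 - c) = p.1 + p.2 - (c + c) := by ring
        rw [this, hcc, sub_zero, hs]
    · intro p hp; simp
    · intro p hp; simp
end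

section
/- Let m = 4k with k ≥ 2 an integer. Define A = {0,...,k-1} ∪ {k+1,...,3k-1} ∪ {3k+1,...,4k-1} and B = {1,...,2k-1} ∪ {2k+1,...,4k-1} as subsets of Z_m. Then A ∪ B = Z_m, |A ∩ B| = m - 4, B ≠ A + m/2, and R_A(n) = R_B(n) for all n ∈ Z_m. -/
open Finset

lemma mem_icc_image {m : ℕ} [NeZero m] {a b : ℕ} (hb : b < m) (x : ZMod m) :
    x ∈ (Finset.Icc a b).image (Nat.cast : ℕ → ZMod m) ↔ a ≤ x.val ∧ x.val ≤ b := by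
  simp only [Finset.mem_image, Finset.mem_Icc]
  constructor
  · rintro ⟨n, ⟨h1, h2⟩, rfl⟩
    rw [ZMod.val_cast_of_lt (lt_of_le_of_lt h2 hb)]
    exact ⟨h1, h2⟩
  · rintro ⟨h1, h2⟩
    exact ⟨x.val, ⟨h1, h2⟩, ZMod.natCast_rightInverse x⟩

theorem stmt5 (m k : ℕ) (hk : 2 ≤ k) (hm : m = 4 * k) [NeZero m]
    (A B : Finset (ZMod m))
    (hA : A = (Finset.Icc 0 (k - 1)).image (Nat.cast : ℕ → ZMod m) ∪
        (Finset.Icc (k + 1) (3 * k - 1)).image (Nat.cast : ℕ → ZMod m) ∪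
        (Finset.Icc (3 * k + 1) (4 * k - 1)).image (Nat.cast : ℕ → ZMod m))
    (hB : B = (Finset.Icc 1 (2 * k - 1)).image (Nat.cast : ℕ → ZMod m) ∪
        (Finset.Icc (2 * k + 1) (4 * k - 1)).image (Nat.cast : ℕ → ZMod m)) :
    A ∪ B = Finset.univ ∧
    (A ∩ B).card = m - 4 ∧
    B ≠ A.image (fun x => x + ((m / 2 : ℕ) : ZMod m)) ∧
    (∀ n : ZMod m, repFn A n = repFn B n) := by
  have hk0 : 0 < k := by omega
  have hvx : ∀ x : ZMod m, x.val < m := fun x => ZMod.val_lt x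
  have hinj : Function.Injective (ZMod.val : ZMod m → ℕ) := ZMod.val_injective m
  have key : ∀ (x : ZMod m) (a : ℕ), a < m → (x = (a : ZMod m) ↔ x.val = a) := by
    intro x a ha
    constructor
    · rintro rfl; exact ZMod.val_cast_of_lt ha
    · intro h; apply hinj; rw [h, ZMod.val_cast_of_lt ha]
  set c : ZMod m := ((k : ℕ) : ZMod m) with hc
  have e2 : ((2*k : ℕ) : ZMod m) = 2*c := by rw [hc]; push_cast; ring
  have e3 : ((3*k : ℕ) : ZMod m) = 3*c := by rw [hc]; push_cast; ring
  have h4c : 4*c = 0 := by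
    have : ((4*k : ℕ) : ZMod m) = 0 := by rw [← hm]; exact ZMod.natCast_self m
    rw [hc]; push_cast at this; linear_combination this
  have vk : c.val = k := ZMod.val_cast_of_lt (by omega)
  have v2k : (2*c).val = 2*k := by rw [← e2]; exact ZMod.val_cast_of_lt (by omega)
  have v3k : (3*c).val = 3*k := by rw [← e3]; exact ZMod.val_cast_of_lt (by omega)
  have hAmem : ∀ x : ZMod m, x ∈ A ↔ x.val ≠ k ∧ x.val ≠ 3*k := by
    intro x
    rw [hA]
    simp only [Finset.mem_union, mem_icc_image (show k-1 < m by omega),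
      mem_icc_image (show 3*k-1 < m by omega), mem_icc_image (show 4*k-1 < m by omega)]
    have := hvx x
    omega
  have hBmem : ∀ x : ZMod m, x ∈ B ↔ x.val ≠ 0 ∧ x.val ≠ 2*k := by
    intro x
    rw [hB]
    simp only [Finset.mem_union, mem_icc_image (show 2*k-1 < m by omega),
      mem_icc_image (show 4*k-1 < m by omega)]
    have := hvx x
    omega
  have hAmem' : ∀ x : ZMod m, x ∈ A ↔ x ≠ c ∧ x ≠ 3*c := by
    intro x
    have e1 := key x k (by omega)
    have e2' : x = 3*c ↔ x.val = 3*k := by rw [← e3]; exact key x (3*k) (by omega)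
    rw [hAmem]
    constructor
    · rintro ⟨h1, h2⟩; exact ⟨fun h => h1 (e1.mp h), fun h => h2 (e2'.mp h)⟩
    · rintro ⟨h1, h2⟩; exact ⟨fun h => h1 (e1.mpr h), fun h => h2 (e2'.mpr h)⟩
  have hBmem' : ∀ x : ZMod m, x ∈ B ↔ x ≠ 0 ∧ x ≠ 2*c := by
    intro x
    have e0 : x = 0 ↔ x.val = 0 := by
      constructor
      · rintro rfl; exact ZMod.val_zero
      · intro h; apply hinj; rw [h, ZMod.val_zero]
    have e2' : x = 2*c ↔ x.val = 2*k := by rw [← e2]; exact key x (2*k) (by omega)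
    rw [hBmem]
    constructor
    · rintro ⟨h1, h2⟩; exact ⟨fun h => h1 (e0.mp h), fun h => h2 (e2'.mp h)⟩
    · rintro ⟨h1, h2⟩; exact ⟨fun h => h1 (e0.mpr h), fun h => h2 (e2'.mpr h)⟩
  refine ⟨?_, ?_, ?_, ?_⟩
  · ext x
    simp only [Finset.mem_union, Finset.mem_univ, iff_true, hAmem, hBmem]
    have := hvx x
    omega
  · have hABset : A ∩ B = univ \ {(0 : ZMod m), c, 2*c, 3*c} := by
      ext x
      simp only [Finset.mem_inter, Finset.mem_sdiff, Finset.mem_univ, true_and,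
        Finset.mem_insert, Finset.mem_singleton, hAmem', hBmem']
      tauto
    rw [hABset, Finset.card_sdiff_of_subset (Finset.subset_univ _)]
    have d1 : (0 : ZMod m) ≠ c := fun h => by
      have := congrArg ZMod.val h; rw [ZMod.val_zero, vk] at this; omega
    have d2 : (0 : ZMod m) ≠ 2*c := fun h => by
      have := congrArg ZMod.val h; rw [ZMod.val_zero, v2k] at this; omega
    have d3 : (0 : ZMod m) ≠ 3*c := fun h => by
      have := congrArg ZMod.val h; rw [ZMod.val_zero, v3k] at this; omega
    have d4 : c ≠ 2*c := fun h => by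
      have := congrArg ZMod.val h; rw [vk, v2k] at this; omega
    have d5 : c ≠ 3*c := fun h => by
      have := congrArg ZMod.val h; rw [vk, v3k] at this; omega
    have d6 : 2*c ≠ 3*c := fun h => by
      have := congrArg ZMod.val h; rw [v2k, v3k] at this; omega
    have hcard4 : ({(0 : ZMod m), c, 2*c, 3*c} : Finset (ZMod m)).card = 4 := by
      rw [Finset.card_insert_of_notMem (by
          simp only [Finset.mem_insert, Finset.mem_singleton]; push_neg
          exact ⟨d1, d2, d3⟩),
        Finset.card_insert_of_notMem (by
          simp only [Finset.mem_insert, Finset.mem_singleton]; push_neg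
          exact ⟨d4, d5⟩),
        Finset.card_insert_of_notMem (by
          simp only [Finset.mem_singleton]; exact d6),
        Finset.card_singleton]
    rw [hcard4, Finset.card_univ, ZMod.card]
  · have hm2 : m / 2 = 2*k := by omega
    intro hEq
    have hkB : c ∈ B := by rw [hBmem, vk]; omega
    rw [hEq, Finset.mem_image] at hkB
    obtain ⟨a, haA, ha⟩ := hkB
    rw [hm2, e2] at ha
    have ha3k : a = 3*c := by linear_combination ha - h4c
    rw [hAmem', ha3k] at haA
    exact haA.2 rfl
  · intro n
    unfold repFn
    apply Finset.card_nbij' (fun p => (p.1 + c, p.2 - c)) (fun p => (p.1 - c, p.2 + c))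
    · intro p hp
      simp only [Finset.mem_coe, Finset.mem_filter, Finset.mem_product, hAmem'] at hp
      obtain ⟨⟨⟨h1, h2⟩, ⟨h3, h4⟩⟩, hsum⟩ := hp
      simp only [Finset.mem_coe, Finset.mem_filter, Finset.mem_product, hBmem']
      refine ⟨⟨⟨?_, ?_⟩, ⟨?_, ?_⟩⟩, by rw [← hsum]; ring⟩
      · intro h; apply h2; linear_combination h - h4c
      · intro h; apply h1; linear_combination h
      · intro h; apply h3; linear_combination h
      · intro h; apply h4; linear_combination h
    · intro p hp
      simp only [Finset.mem_coe, Finset.mem_filter, Finset.mem_product, hBmem'] at hp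
      obtain ⟨⟨⟨h1, h2⟩, ⟨h3, h4⟩⟩, hsum⟩ := hp
      simp only [Finset.mem_coe, Finset.mem_filter, Finset.mem_product, hAmem']
      refine ⟨⟨⟨?_, ?_⟩, ⟨?_, ?_⟩⟩, by rw [← hsum]; ring⟩
      · intro h; apply h2; linear_combination h
      · intro h; apply h1; linear_combination h + h4c
      · intro h; apply h3; linear_combination h
      · intro h; apply h4; linear_combination h
    · intro p hp; simp
    · intro p hp; simp
end

section
/- For every positive integer m divisible by 4, there exist two distinct sets A, B ⊆ Z_m with A ∪ B = Z_m, |A ∩ B| = 4, B ≠ A + m/2, and R_A(n) = R_B(n) for all n ∈ Z_m. (For m = 4, interpret the condition |A ∩ B| = 4 as the case |A ∩ B| = m - 4 = 0.) -/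
open Finset

lemma repFn_image {m : ℕ} (A : Finset (ZMod m)) (c n : ZMod m) :
    repFn (A.image (fun x => x + c)) n = repFn A (n - c - c) := by
  unfold repFn
  have hinj : Function.Injective (fun p : ZMod m × ZMod m => (p.1 + c, p.2 + c)) := by
    intro p q h
    rw [Prod.ext_iff] at h ⊢
    exact ⟨add_right_cancel h.1, add_right_cancel h.2⟩
  have hset : ((A.image (fun x => x + c)) ×ˢ (A.image (fun x => x + c))).filter
        (fun p => p.1 + p.2 = n)
      = ((A ×ˢ A).filter (fun p => p.1 + p.2 = n - c - c)).image
        (fun p => (p.1 + c, p.2 + c)) := by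
    ext ⟨u, v⟩
    simp only [Finset.mem_filter, Finset.mem_product, Finset.mem_image, Prod.mk.injEq]
    constructor
    · rintro ⟨⟨⟨a, ha, rfl⟩, ⟨b, hb, rfl⟩⟩, hsum⟩
      exact ⟨(a, b), ⟨⟨ha, hb⟩, by linear_combination hsum⟩, rfl, rfl⟩
    · rintro ⟨⟨a, b⟩, ⟨⟨ha, hb⟩, hs⟩, rfl, rfl⟩
      exact ⟨⟨⟨a, ha, rfl⟩, ⟨b, hb, rfl⟩⟩, by linear_combination hs⟩
  rw [hset]
  exact Finset.card_image_of_injective _ hinj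

lemma repFn_shift {m : ℕ} (A : Finset (ZMod m)) (c : ZMod m)
    (hA : A.image (fun x => x + c) = A) (n : ZMod m) :
    repFn A (n + c) = repFn A n := by
  unfold repFn
  have hmem : ∀ x, x ∈ A → x + c ∈ A := fun x hx => by
    rw [← hA]; exact Finset.mem_image_of_mem _ hx
  have hmem' : ∀ x, x ∈ A → ∃ a ∈ A, a + c = x := fun x hx => by
    rw [← hA] at hx; simpa using Finset.mem_image.mp hx
  have hinj : Function.Injective (fun p : ZMod m × ZMod m => (p.1 + c, p.2)) := by
    intro p q h
    rw [Prod.ext_iff] at h ⊢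
    exact ⟨add_right_cancel h.1, h.2⟩
  have hset : (A ×ˢ A).filter (fun p => p.1 + p.2 = n + c)
      = ((A ×ˢ A).filter (fun p => p.1 + p.2 = n)).image (fun p => (p.1 + c, p.2)) := by
    ext ⟨u, v⟩
    simp only [Finset.mem_filter, Finset.mem_product, Finset.mem_image, Prod.mk.injEq]
    constructor
    · rintro ⟨⟨hu, hv⟩, hsum⟩
      obtain ⟨a, ha, rfl⟩ := hmem' u hu
      exact ⟨(a, v), ⟨⟨ha, hv⟩, by linear_combination hsum⟩, rfl, rfl⟩
    · rintro ⟨⟨a, b⟩, ⟨⟨ha, hb⟩, hs⟩, rfl, rfl⟩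
      exact ⟨⟨hmem _ ha, hb⟩, by linear_combination hs⟩
  rw [hset]
  exact Finset.card_image_of_injective _ hinj

theorem stmt7 (m : ℕ) [NeZero m] (h4 : 4 ∣ m) :
    ∃ A B : Finset (ZMod m), A ≠ B ∧ A ∪ B = Finset.univ ∧
      (A ∩ B).card = (if m = 4 then 0 else 4) ∧
      B ≠ A.image (fun x => x + ((m / 2 : ℕ) : ZMod m)) ∧
      (∀ n : ZMod m, repFn A n = repFn B n) := by
  by_cases hm4 : m = 4
  · subst hm4
    have c1 : ({0, 2} : Finset (ZMod 4)) ≠ {1, 3} := by decide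
    have c2 : ({0, 2} : Finset (ZMod 4)) ∪ {1, 3} = Finset.univ :=
      Finset.eq_univ_iff_forall.mpr (by decide)
    have c3 : (({0, 2} : Finset (ZMod 4)) ∩ {1, 3}).card = (if 4 = 4 then 0 else 4) := by
      decide
    have c4 : ({1, 3} : Finset (ZMod 4)) ≠
        ({0, 2} : Finset (ZMod 4)).image (fun x => x + ((4 / 2 : ℕ) : ZMod 4)) := by decide
    have c5 : ∀ n : ZMod 4, repFn ({0, 2} : Finset (ZMod 4)) n
        = repFn ({1, 3} : Finset (ZMod 4)) n := by decide
    exact ⟨{0, 2}, {1, 3}, c1, c2, c3, c4, c5⟩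
  · obtain ⟨k, rfl⟩ := h4
    have hk0 : k ≠ 0 := by
      rintro rfl
      exact (NeZero.ne (4 * 0)) rfl
    have hk2 : 2 ≤ k := by omega
    have hvlt : ∀ x : ZMod (4 * k), x.val < 4 * k := fun x => ZMod.val_lt x
    have hvadd : ∀ (x : ZMod (4 * k)) (j : ℕ), j < 4 * k →
        (x + (j : ZMod (4 * k))).val = (x.val + j) % (4 * k) := by
      intro x j hj
      rw [ZMod.val_add, ZMod.val_cast_of_lt hj]
    have hmod : ∀ a j : ℕ, a < 4 * k → j < 4 * k →
        (a + j) % (4 * k) = if a + j < 4 * k then a + j else a + j - 4 * k := by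
      intro a j ha hj
      split_ifs with h
      · exact Nat.mod_eq_of_lt h
      · have h2 : a + j - 4 * k < 4 * k := by omega
        rw [Nat.mod_eq_sub_mod (by omega), Nat.mod_eq_of_lt h2]
    set A : Finset (ZMod (4 * k)) :=
      Finset.univ.filter (fun x => x.val ≤ k ∨ (2 * k ≤ x.val ∧ x.val ≤ 3 * k)) with hAdef
    set B : Finset (ZMod (4 * k)) := A.image (fun x => x + (k : ZMod (4 * k))) with hBdef
    have memA : ∀ x : ZMod (4 * k),
        x ∈ A ↔ (x.val ≤ k ∨ (2 * k ≤ x.val ∧ x.val ≤ 3 * k)) := by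
      intro x; simp [hAdef]
    have memB : ∀ x : ZMod (4 * k),
        x ∈ B ↔ ((k ≤ x.val ∧ x.val ≤ 2 * k) ∨ 3 * k ≤ x.val ∨ x.val = 0) := by
      intro x
      rw [hBdef]
      simp only [Finset.mem_image]
      constructor
      · rintro ⟨a, ha, rfl⟩
        rw [memA] at ha
        have hav := hvlt a
        rw [hvadd a k (by omega), hmod _ _ hav (by omega)]
        split_ifs <;> omega
      · intro hx
        refine ⟨x + ((3 * k : ℕ) : ZMod (4 * k)), ?_, ?_⟩
        · rw [memA]
          have hxv := hvlt x
          rw [hvadd x (3 * k) (by omega), hmod _ _ hxv (by omega)]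
          split_ifs <;> omega
        · rw [add_assoc, ← Nat.cast_add, show 3 * k + k = 4 * k from by omega,
            ZMod.natCast_self, add_zero]
    have hA2 : A.image (fun x => x + ((2 * k : ℕ) : ZMod (4 * k))) = A := by
      ext x
      simp only [Finset.mem_image]
      constructor
      · rintro ⟨a, ha, rfl⟩
        rw [memA] at ha ⊢
        have hav := hvlt a
        rw [hvadd a (2 * k) (by omega), hmod _ _ hav (by omega)]
        split_ifs <;> omega
      · intro hx
        rw [memA] at hx
        refine ⟨x + ((2 * k : ℕ) : ZMod (4 * k)), ?_, ?_⟩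
        · rw [memA]
          have hxv := hvlt x
          rw [hvadd x (2 * k) (by omega), hmod _ _ hxv (by omega)]
          split_ifs <;> omega
        · rw [add_assoc, ← Nat.cast_add, show 2 * k + 2 * k = 4 * k from by omega,
            ZMod.natCast_self, add_zero]
    have hv1 : (1 : ZMod (4 * k)).val = 1 := by
      haveI : Fact (1 < 4 * k) := ⟨by omega⟩
      exact ZMod.val_one _
    have h1A : (1 : ZMod (4 * k)) ∈ A := by rw [memA, hv1]; omega
    have h1B : (1 : ZMod (4 * k)) ∉ B := by rw [memB, hv1]; omega
    have hAB : A ≠ B := fun h => h1B (h ▸ h1A)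
    have hkey : ∀ j : ℕ, j < 4 * k → ∀ x : ZMod (4 * k),
        (x.val = j ↔ x = (j : ZMod (4 * k))) := by
      intro j hj x
      constructor
      · intro h
        rw [← h]
        exact (ZMod.natCast_rightInverse x).symm
      · intro h
        rw [h]
        exact ZMod.val_cast_of_lt hj
    refine ⟨A, B, hAB, ?_, ?_, ?_, ?_⟩
    · ext x
      have hxv := hvlt x
      simp only [Finset.mem_union, Finset.mem_univ, iff_true, memA, memB]
      omega
    · rw [if_neg hm4]
      have hI : A ∩ B = {((0 : ℕ) : ZMod (4 * k)), ((k : ℕ) : ZMod (4 * k)),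
          ((2 * k : ℕ) : ZMod (4 * k)), ((3 * k : ℕ) : ZMod (4 * k))} := by
        ext x
        have hxv := hvlt x
        simp only [Finset.mem_inter, Finset.mem_insert, Finset.mem_singleton, memA, memB,
          ← hkey 0 (by omega) x, ← hkey k (by omega) x, ← hkey (2 * k) (by omega) x,
          ← hkey (3 * k) (by omega) x]
        omega
      have hne : ∀ i j : ℕ, i < 4 * k → j < 4 * k → i ≠ j →
          ((i : ZMod (4 * k)) ≠ (j : ZMod (4 * k))) := by
        intro i j hi hj hij h
        exact hij (by rw [← ZMod.val_cast_of_lt hi, ← ZMod.val_cast_of_lt hj, h])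
      rw [hI]
      rw [Finset.card_insert_of_notMem (by
          simp only [Finset.mem_insert, Finset.mem_singleton]
          push_neg
          exact ⟨hne 0 k (by omega) (by omega) (by omega),
            hne 0 (2 * k) (by omega) (by omega) (by omega),
            hne 0 (3 * k) (by omega) (by omega) (by omega)⟩),
        Finset.card_insert_of_notMem (by
          simp only [Finset.mem_insert, Finset.mem_singleton]
          push_neg
          exact ⟨hne k (2 * k) (by omega) (by omega) (by omega),
            hne k (3 * k) (by omega) (by omega) (by omega)⟩),
        Finset.card_insert_of_notMem (by
          simp only [Finset.mem_singleton]
          exact hne (2 * k) (3 * k) (by omega) (by omega) (by omega)),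
        Finset.card_singleton]
    · rw [show (4 * k) / 2 = 2 * k from by omega, hA2]
      intro h
      exact h1B (h ▸ h1A)
    · intro n
      have h1 : repFn B n = repFn A (n - (k : ZMod (4 * k)) - (k : ZMod (4 * k))) := by
        rw [hBdef]
        exact repFn_image A _ n
      have h2 : repFn A ((n - (k : ZMod (4 * k)) - (k : ZMod (4 * k)))
            + ((2 * k : ℕ) : ZMod (4 * k)))
          = repFn A (n - (k : ZMod (4 * k)) - (k : ZMod (4 * k))) :=
        repFn_shift A _ hA2 _
      have h3 : (n - (k : ZMod (4 * k)) - (k : ZMod (4 * k)))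
          + ((2 * k : ℕ) : ZMod (4 * k)) = n := by
        push_cast
        ring
      rw [h1, ← h2, h3]
end

section
/- Let m be a positive even integer and let A, B ⊆ Z_m with A ∪ B = Z_m and A ∩ B = {r_1, r_2} where r_1 ≠ r_2. If R_A(n) = R_B(n) for all n ∈ Z_m, then r_2 = r_1 + m/2. -/
open Finset

private lemma aux_half (m : ℕ) [NeZero m] (hm : Even m) (d : ZMod m) (hd : d ≠ 0)
    (h2 : d + d = 0) : d = ((m / 2 : ℕ) : ZMod m) := by
  obtain ⟨k, hk⟩ := hm
  have hm0 : m ≠ 0 := NeZero.ne m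
  have hv : d.val < m := ZMod.val_lt d
  have hvne : d.val ≠ 0 := fun h => hd ((ZMod.val_eq_zero d).1 h)
  have hcast : ((d.val + d.val : ℕ) : ZMod m) = 0 := by
    push_cast [ZMod.natCast_val, ZMod.cast_id]
    exact h2
  have hdvd : m ∣ d.val + d.val := (ZMod.natCast_eq_zero_iff _ _).1 hcast
  obtain ⟨c, hc⟩ := hdvd
  have hc2 : c < 2 := by
    by_contra hcge
    push_neg at hcge
    have : m * 2 ≤ m * c := Nat.mul_le_mul_left m hcge
    omega
  have hval : d.val = m / 2 := by interval_cases c <;> omega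
  have hvd : ((d.val : ℕ) : ZMod m) = d := (ZMod.natCast_val d).trans (ZMod.cast_id _ _)
  rw [← hvd, hval]

private lemma repFn_eq_sum {m : ℕ} [NeZero m] (C : Finset (ZMod m)) (n : ZMod m) :
    (repFn C n : ℤ) = ∑ x : ZMod m,
      (if x ∈ C then (1:ℤ) else 0) * (if n - x ∈ C then (1:ℤ) else 0) := by
  rw [repFn, Finset.card_filter]
  push_cast
  rw [Finset.sum_product]
  have h1 : ∀ x : ZMod m, (∑ y ∈ C, if x + y = n then (1:ℤ) else 0)
      = if n - x ∈ C then (1:ℤ) else 0 := by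
    intro x
    have he : ∀ y : ZMod m, (x + y = n) ↔ (y = n - x) :=
      fun y => ⟨fun h => by rw [← h]; ring, fun h => by rw [h]; ring⟩
    simp_rw [he]
    simp [Finset.sum_ite_eq']
  simp_rw [h1, boole_mul, ← Finset.sum_filter, Finset.filter_mem_eq_inter,
    Finset.univ_inter]

theorem stmt13 (m : ℕ) [NeZero m] (hm : Even m)
    (A B : Finset (ZMod m)) (r₁ r₂ : ZMod m) (hr : r₁ ≠ r₂)
    (hU : A ∪ B = Finset.univ) (hI : A ∩ B = {r₁, r₂})
    (hR : ∀ n : ZMod m, repFn A n = repFn B n) :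
    r₂ = r₁ + ((m / 2 : ℕ) : ZMod m) := by
  classical
  set F : ZMod m → ℤ := fun x => if x ∈ A then 1 else 0 with hF
  set G : ZMod m → ℤ := fun x => if x ∈ B then 1 else 0 with hG
  set h : ZMod m → ℤ := fun x => F x - G x with hh
  have hmem : ∀ x : ZMod m, x ∈ A ∨ x ∈ B := by
    intro x
    have : x ∈ A ∪ B := by rw [hU]; exact mem_univ x
    simpa using this
  have hboth : ∀ x : ZMod m, (x ∈ A ∧ x ∈ B) ↔ (x = r₁ ∨ x = r₂) := by
    intro x
    constructor
    · intro hx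
      have : x ∈ A ∩ B := mem_inter.2 hx
      rw [hI] at this; simpa using this
    · intro hx
      have : x ∈ A ∩ B := by rw [hI]; simpa using hx
      exact mem_inter.1 this
  -- h vanishes exactly on {r₁, r₂}
  have hzero : ∀ x : ZMod m, h x = 0 ↔ (x = r₁ ∨ x = r₂) := by
    intro x
    rw [← hboth]
    by_cases h1 : x ∈ A <;> by_cases h2 : x ∈ B <;>
      simp [hh, hF, hG, h1, h2] <;> exact (hmem x).elim h1 h2
  -- F + G = 1 + indicators
  have hsum : ∀ x : ZMod m, F x + G x
      = 1 + (if x = r₁ then 1 else 0) + (if x = r₂ then 1 else 0) := by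
    intro x
    by_cases h1 : x ∈ A <;> by_cases h2 : x ∈ B
    · have := (hboth x).1 ⟨h1, h2⟩
      rcases this with h | h <;> subst h <;>
        simp [hF, hG, h1, h2, hr, hr.symm]
    · have hx : ¬ (x = r₁ ∨ x = r₂) := fun hc => h2 ((hboth x).2 hc).2
      push_neg at hx
      simp [hF, hG, h1, h2, hx.1, hx.2]
    · have hx : ¬ (x = r₁ ∨ x = r₂) := fun hc => h1 ((hboth x).2 hc).1
      push_neg at hx
      simp [hF, hG, h1, h2, hx.1, hx.2]
    · exact absurd (hmem x) (by simp [h1, h2])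
  -- convolution identity: (h * (F+G))(n) = 0
  have hconv : ∀ n : ZMod m, ∑ x : ZMod m, h x * (F (n - x) + G (n - x)) = 0 := by
    intro n
    have hcross : ∑ x : ZMod m, F x * G (n - x) = ∑ x : ZMod m, G x * F (n - x) := by
      refine Fintype.sum_equiv (Equiv.subLeft n) _ _ ?_
      intro x
      simp [Equiv.subLeft, mul_comm]
    have hFF : ∑ x : ZMod m, F x * F (n - x) = ∑ x : ZMod m, G x * G (n - x) := by
      rw [← repFn_eq_sum A n, ← repFn_eq_sum B n, hR n]
    calc ∑ x : ZMod m, h x * (F (n - x) + G (n - x))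
        = (∑ x : ZMod m, F x * F (n - x)) - (∑ x : ZMod m, G x * G (n - x))
          + ((∑ x : ZMod m, F x * G (n - x)) - ∑ x : ZMod m, G x * F (n - x)) := by
          simp only [hh, ← Finset.sum_sub_distrib, ← Finset.sum_add_distrib]
          apply Finset.sum_congr rfl
          intro x _
          ring
      _ = 0 := by rw [hFF, hcross]; ring
  -- expand using hsum to get: S + h(n-r₁) + h(n-r₂) = 0
  have hpick : ∀ (c n : ZMod m),
      ∑ x : ZMod m, h x * (if n - x = c then (1:ℤ) else 0) = h (n - c) := by
    intro c n
    have he : ∀ x : ZMod m, (n - x = c) ↔ (x = n - c) :=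
      fun x => ⟨fun hx => by rw [← hx]; ring, fun hx => by rw [hx]; ring⟩
    simp_rw [he, mul_ite, mul_one, mul_zero]
    simp [Finset.sum_ite_eq']
  have hkey : ∀ n : ZMod m, (∑ x : ZMod m, h x) + h (n - r₁) + h (n - r₂) = 0 := by
    intro n
    have := hconv n
    simp_rw [hsum] at this
    have expand : ∑ x : ZMod m, h x *
        (1 + (if n - x = r₁ then (1:ℤ) else 0) + (if n - x = r₂ then 1 else 0))
        = (∑ x : ZMod m, h x) + (∑ x : ZMod m, h x * (if n - x = r₁ then (1:ℤ) else 0))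
          + ∑ x : ZMod m, h x * (if n - x = r₂ then (1:ℤ) else 0) := by
      simp only [← Finset.sum_add_distrib]
      apply Finset.sum_congr rfl
      intro x _
      ring
    rw [expand, hpick, hpick] at this
    exact this
  -- sum over n shows S = 0
  have hS : (∑ x : ZMod m, h x) = 0 := by
    set S : ℤ := ∑ x : ZMod m, h x with hSdef
    have hshift : ∀ c : ZMod m, ∑ n : ZMod m, h (n - c) = S := by
      intro c
      exact Fintype.sum_equiv (Equiv.subRight c) _ h (fun n => rfl)
    have htot : ∑ n : ZMod m, (S + h (n - r₁) + h (n - r₂)) = 0 := by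
      simp [hkey]
    rw [Finset.sum_add_distrib, Finset.sum_add_distrib, hshift, hshift,
      Finset.sum_const] at htot
    have hcard : (Finset.univ : Finset (ZMod m)).card = m := by
      simp [ZMod.card]
    rw [hcard] at htot
    rw [nsmul_eq_mul] at htot
    have : ((m : ℤ) + 2) * S = 0 := by linarith
    have hmne : ((m : ℤ) + 2) ≠ 0 := by positivity
    exact (mul_eq_zero.1 this).resolve_left hmne
  have hanti : ∀ n : ZMod m, h (n - r₁) = - h (n - r₂) := by
    intro n
    have := hkey n
    rw [hS] at this
    linarith
  -- h r₂ = 0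
  have hr2 : h r₂ = 0 := (hzero r₂).2 (Or.inr rfl)
  -- apply with n = r₂ + r₂
  have h0 : h (r₂ + r₂ - r₁) = 0 := by
    have := hanti (r₂ + r₂)
    rw [show r₂ + r₂ - r₂ = r₂ by ring, hr2] at this
    simpa using this
  have := (hzero _).1 h0
  rcases this with hc | hc
  · -- r₂ + r₂ - r₁ = r₁, so d = r₂ - r₁ satisfies d + d = 0
    have hd2 : (r₂ - r₁) + (r₂ - r₁) = 0 := by linear_combination hc
    have hdne : r₂ - r₁ ≠ 0 := sub_ne_zero.2 (Ne.symm hr)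
    have := aux_half m hm (r₂ - r₁) hdne hd2
    rw [← this]; ring
  · exfalso
    apply hr
    have : r₂ + r₂ - r₁ = r₂ := hc
    linear_combination -this
end
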